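/- Let W be a left separating point of M with WA = AW for all A ∈ A. If δ : A → M is linear and satisfies δ(W) = Aδ(B)* + B*δ(A) whenever AB* = W, then δ is a Jordan left derivation. -/
import Mathlib


open MulOpposite

/-- If `W` is a left separating point of `M` with `W A = A W` for all `A`, and
`δ(W) = A δ(B)* + B* δ(A)` whenever `A B* = W`, then `δ` is a Jordan left derivation. -/
theorem stmt10 {A : Type*} {M : Type*}
    [NormedRing A] [NormedAlgebra ℂ A] [CompleteSpace A] [StarRing A]
    [AddCommGroup M] [Module ℂ M] [Module A M] [Module Aᵐᵒᵖ M]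
    [SMulCommClass A Aᵐᵒᵖ M] [IsScalarTower ℂ A M] [IsScalarTower ℂ Aᵐᵒᵖ M]
    [StarAddMonoid M]
    (hstar_left : ∀ (a : A) (m : M), star (a • m) = op (star a) • star m)
    (hstar_right : ∀ (a : A) (m : M), star (op a • m) = star a • star m)
    (W : A) (hW : ∀ m : M, W • m = 0 → m = 0)
    (hcomm : ∀ a : A, W * a = a * W)
    (δ : A →ₗ[ℂ] M)
    (hδ : ∀ a b : A, a * star b = W → δ W = a • star (δ b) + star b • δ a) :
    ∀ a : A, δ (a * a) = (2 : ℂ) • (a • δ a) := by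
  -- scalar commutation in M
  have hsc : ∀ (x : A) (z : ℂ) (m : M), x • (z • m) = z • (x • m) := by
    intro x z m
    calc x • (z • m) = x • ((z • (1:A)) • m) := by rw [smul_one_smul]
    _ = (x * (z • (1:A))) • m := by rw [smul_smul]
    _ = (z • (x * 1)) • m := by rw [mul_smul_comm]
    _ = (z • x) • m := by rw [mul_one]
    _ = z • (x • m) := by rw [smul_assoc]
  -- cancellation helper
  have cancel : ∀ X Y E F : M, X + Y - E = X - F + Y → E = F := by
    intro X Y E F h
    have h2 : E = X + Y - (X + Y - E) := by abel
    rw [h] at h2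
    rw [h2]; abel
  -- δ 1 = 0
  have hδ1 : δ (1 : A) = 0 := by
    have h := hδ W 1 (by rw [star_one, mul_one])
    rw [star_one, one_smul] at h
    have h0 : W • star (δ (1:A)) = 0 := by
      have h' : W • star (δ (1:A)) + δ W = 0 + δ W := by rw [zero_add]; exact h.symm
      exact add_right_cancel h'
    exact star_eq_zero.mp (hW _ h0)
  -- G on scalar multiples of W
  have hGscal : ∀ z : ℂ, z ≠ 0 → star (δ (star ((z⁻¹ • (1:A)) * W))) = z⁻¹ • δ W := by
    intro z hz
    have hb : (z • (1:A)) * star (star ((z⁻¹ • (1:A)) * W)) = W := by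
      rw [star_star, smul_mul_assoc, one_mul, smul_mul_assoc, one_mul, smul_smul,
        mul_inv_cancel₀ hz, one_smul]
    have h := hδ (z • (1:A)) (star ((z⁻¹ • (1:A)) * W)) hb
    rw [star_star, map_smul, hδ1, smul_zero, smul_zero, add_zero, smul_one_smul] at h
    have h2 := congrArg (fun m => z⁻¹ • m) h
    simp only [smul_smul, inv_mul_cancel₀ hz, one_smul] at h2
    exact h2.symm
  -- G on u⁻¹ * W for units u
  have hGval : ∀ u : Aˣ,
      star (δ (star ((↑u⁻¹ : A) * W))) =
        (↑u⁻¹ : A) • δ W - ((↑u⁻¹ : A) * ((↑u⁻¹ : A) * W)) • δ (↑u : A) := by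
    intro u
    have hb : (↑u : A) * star (star ((↑u⁻¹ : A) * W)) = W := by
      rw [star_star]; exact Units.mul_inv_cancel_left u W
    have h := hδ (↑u) (star ((↑u⁻¹ : A) * W)) hb
    rw [star_star] at h
    have h2 := congrArg (fun m => (↑u⁻¹ : A) • m) h
    simp only [smul_add, smul_smul] at h2
    rw [Units.inv_mul, one_smul] at h2
    exact eq_sub_of_add_eq h2.symm
  -- key lemma : the inverse relation
  have key : ∀ (a t : Aˣ) (c : ℂ), c ≠ 0 → (↑t : A) = ↑a + c • 1 →
      W • δ (↑a : A) = -(((↑t : A) * ((↑t : A) * W)) • δ (↑t⁻¹ : A)) := by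
    intro a t c hc ht
    have hat : (↑a : A) * ↑t = ↑t * ↑a := by
      rw [ht, mul_add, add_mul, mul_smul_comm, smul_mul_assoc, mul_one, one_mul]
    have cat : Commute (↑a : A) (↑t : A) := hat
    have cait : Commute (↑a⁻¹ : A) (↑t : A) := cat.units_inv_left
    have caiti : Commute (↑a⁻¹ : A) (↑t⁻¹ : A) := cait.units_inv_right
    have ctai : Commute (↑t : A) (↑a⁻¹ : A) := cait.symm
    have hend : (c : ℂ) • (↑t⁻¹ : A) + (↑t⁻¹ : A) * ↑a = 1 := by
      rw [show (c:ℂ) • (↑t⁻¹ : A) = (↑t⁻¹ : A) * (c • 1) from by rw [mul_smul_comm, mul_one],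
        ← mul_add, add_comm ((c:ℂ) • (1:A)) (↑a : A), ← ht, Units.inv_mul]
    have pf1 : ((↑a⁻¹ : A) + c⁻¹ • 1) * (c • ((↑t⁻¹ : A) * ↑a)) = 1 := by
      have h1 : (↑a⁻¹ : A) * ((↑t⁻¹ : A) * ↑a) = ↑t⁻¹ := by
        rw [← mul_assoc, caiti.eq, mul_assoc, Units.inv_mul, mul_one]
      rw [add_mul, mul_smul_comm, h1, smul_mul_assoc, one_mul, smul_smul,
        inv_mul_cancel₀ hc, one_smul]
      exact hend
    have pf2 : (c • ((↑t⁻¹ : A) * ↑a)) * ((↑a⁻¹ : A) + c⁻¹ • 1) = 1 := by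
      have h2 : ((↑t⁻¹ : A) * ↑a) * ↑a⁻¹ = ↑t⁻¹ := by
        rw [mul_assoc, Units.mul_inv, mul_one]
      rw [mul_add, smul_mul_assoc, h2, mul_smul_comm, mul_one, smul_smul,
        inv_mul_cancel₀ hc, one_smul]
      exact hend
    let du : Aˣ := ⟨(↑a⁻¹ : A) + c⁻¹ • 1, c • ((↑t⁻¹ : A) * ↑a), pf1, pf2⟩
    have hduv : ((du : Aˣ) : A) = (↑a⁻¹ : A) + c⁻¹ • 1 := rfl
    have hduiv : ((du⁻¹ : Aˣ) : A) = c • ((↑t⁻¹ : A) * ↑a) := rfl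
    have h3 := hGval du⁻¹
    rw [inv_inv] at h3
    have hsplit : star (δ (star ((↑du : A) * W))) =
        star (δ (star ((↑a⁻¹ : A) * W))) + star (δ (star ((c⁻¹ • (1:A)) * W))) := by
      rw [hduv, add_mul, star_add, map_add, star_add]
    rw [hsplit, hGval a, hGscal c hc, hduv, hduiv] at h3
    have hadd : ((↑a⁻¹ : A) + c⁻¹ • 1) • δ W = (↑a⁻¹ : A) • δ W + c⁻¹ • δ W := by
      rw [add_smul, smul_one_smul]
    rw [hadd] at h3
    have hE := cancel _ _ _ _ h3.symm
    have hta2 : (↑t⁻¹ : A) * ↑a = 1 - c • (↑t⁻¹ : A) := by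
      have ha' : (↑a : A) = ↑t - c • 1 := by rw [ht]; abel
      rw [ha', mul_sub, Units.inv_mul, mul_smul_comm, mul_one]
    have hδe : δ ((c : ℂ) • ((↑t⁻¹ : A) * ↑a)) = -(((c*c) : ℂ) • δ (↑t⁻¹ : A)) := by
      rw [map_smul, hta2, map_sub, map_smul, hδ1, zero_sub, smul_neg, smul_smul]
    rw [hδe, smul_neg, hsc, ← smul_assoc] at hE
    have hcd : (c : ℂ) • ((↑a⁻¹ : A) + c⁻¹ • 1) = (↑a⁻¹ : A) * ↑t := by
      rw [smul_add, smul_smul, mul_inv_cancel₀ hc, one_smul, ht, mul_add, Units.inv_mul,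
        mul_smul_comm, mul_one, add_comm]
    have hrr : ((c*c) : ℂ) • (((↑a⁻¹ : A) + c⁻¹ • 1) * (((↑a⁻¹ : A) + c⁻¹ • 1) * W)) =
        ((↑a⁻¹ : A) * ↑t) * (((↑a⁻¹ : A) * ↑t) * W) := by
      rw [← hcd, smul_mul_assoc, smul_mul_assoc, mul_smul_comm, smul_smul]
    rw [hrr] at hE
    have swat : ∀ z : A, (↑t : A) * ((↑a⁻¹ : A) * z) = (↑a⁻¹ : A) * ((↑t : A) * z) := by
      intro z; rw [← mul_assoc, ctai.eq, mul_assoc]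
    have r1 : (↑a : A) * ((↑a : A) * (((↑a⁻¹ : A) * ↑t) * (((↑a⁻¹ : A) * ↑t) * W))) =
        (↑t : A) * ((↑t : A) * W) := by
      simp only [mul_assoc, swat, Units.mul_inv_cancel_left]
    have r2 : (↑a : A) * ((↑a : A) * ((↑a⁻¹ : A) * ((↑a⁻¹ : A) * W))) = W := by
      simp only [Units.mul_inv_cancel_left]
    have h5 := congrArg (fun m => (↑a : A) • ((↑a : A) • m)) hE
    simp only [smul_neg, smul_smul] at h5
    rw [r1, r2] at h5
    exact h5.symm
  -- construction of scalar shifts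
  have shift : ∀ x : A, ∃ (c : ℂ) (s : Aˣ), c ≠ 0 ∧ (↑s : A) = c • 1 - x := by
    intro x
    have hrpos : (0:ℝ) < ‖x‖ + 1 := by positivity
    set c : ℂ := ((‖x‖ + 1 : ℝ) : ℂ) with hcdef
    have hc0 : c ≠ 0 := by
      rw [hcdef]
      exact_mod_cast hrpos.ne'
    have hnormc : ‖c‖ = ‖x‖ + 1 := by
      rw [hcdef, Complex.norm_real, Real.norm_of_nonneg hrpos.le]
    have hnorm : ‖c⁻¹ • x‖ < 1 := by
      rw [norm_smul, norm_inv, hnormc]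
      calc (‖x‖ + 1)⁻¹ * ‖x‖ < (‖x‖ + 1)⁻¹ * (‖x‖ + 1) := by
            apply mul_lt_mul_of_pos_left (by linarith) (inv_pos.mpr hrpos)
      _ = 1 := inv_mul_cancel₀ hrpos.ne'
    refine ⟨c, Units.map (algebraMap ℂ A).toMonoidHom (Units.mk0 c hc0) *
      Units.oneSub (c⁻¹ • x) hnorm, hc0, ?_⟩
    rw [Units.val_mul, Units.coe_map, Units.val_oneSub]
    show algebraMap ℂ A c * ((1:A) - c⁻¹ • x) = c • 1 - x
    rw [Algebra.algebraMap_eq_smul_one, smul_mul_assoc, one_mul, smul_sub, smul_smul,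
      mul_inv_cancel₀ hc0, one_smul]
  -- lemma D
  have lemD : ∀ u : Aˣ, W • δ (↑u : A) = -(((↑u : A) * ((↑u : A) * W)) • δ (↑u⁻¹ : A)) := by
    intro u
    obtain ⟨c, s, hc0, hs⟩ := shift (↑u : A)
    have hts : (↑u : A) = ↑(-s) + c • 1 := by rw [Units.val_neg, hs]; abel
    have h := key (-s) u c hc0 hts
    have hδs : δ (↑(-s) : A) = δ (↑u : A) := by
      rw [Units.val_neg, hs, map_neg, map_sub, map_smul, hδ1, smul_zero, zero_sub, neg_neg]
    rw [hδs] at h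
    exact h
  -- main result for units
  have mainU : ∀ t : Aˣ, δ ((↑t : A) * ↑t) = (2:ℂ) • ((↑t : A) • δ (↑t : A)) := by
    intro t
    obtain ⟨c, s, hc0, hs⟩ := shift (↑t : A)
    have hst : (↑s : A) * ↑t = ↑t * ↑s := by
      rw [hs, sub_mul, mul_sub, smul_mul_assoc, mul_smul_comm, one_mul, mul_one]
    have cst : Commute (↑s : A) (↑t : A) := hst
    have csti : Commute (↑s⁻¹ : A) (↑t : A) := cst.units_inv_left
    have swst : ∀ z : A, (↑s : A) * ((↑t : A) * z) = (↑t : A) * ((↑s : A) * z) := by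
      intro z; rw [← mul_assoc, hst, mul_assoc]
    have hI : (↑t⁻¹ : A) + ↑s⁻¹ = c • (↑(t*s)⁻¹ : A) := by
      have hval : (↑(t*s)⁻¹ : A) = ↑s⁻¹ * ↑t⁻¹ := by rw [mul_inv_rev, Units.val_mul]
      rw [hval]
      have hts' : (c : ℂ) • (1:A) = ↑t + ↑s := by rw [hs]; abel
      rw [show (c:ℂ) • ((↑s⁻¹ : A) * ↑t⁻¹) = ((c:ℂ) • (1:A)) * ((↑s⁻¹ : A) * ↑t⁻¹) from by
          rw [smul_mul_assoc, one_mul],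
        hts', add_mul, Units.mul_inv_cancel_left, ← mul_assoc, csti.symm.eq, mul_assoc,
        Units.mul_inv, mul_one, add_comm]
    have h1 : δ (↑t⁻¹ : A) + δ (↑s⁻¹ : A) = c • δ (↑(t*s)⁻¹ : A) := by
      rw [← map_add, hI, map_smul]
    have h2 := congrArg
      (fun m => ((↑(t*s) : A) * ((↑(t*s) : A) * W)) • m) h1
    simp only [smul_add] at h2
    rw [hsc] at h2
    have hδs : δ (↑s : A) = -δ (↑t : A) := by
      rw [hs, map_sub, map_smul, hδ1, smul_zero, zero_sub]
    have rp : (↑(t*s) : A) * ((↑(t*s) : A) * W) =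
        ((↑s : A) * ↑s) * ((↑t : A) * ((↑t : A) * W)) := by
      simp only [Units.val_mul, mul_assoc, swst]
    have rp2 : (↑(t*s) : A) * ((↑(t*s) : A) * W) =
        ((↑t : A) * ↑t) * ((↑s : A) * ((↑s : A) * W)) := by
      simp only [Units.val_mul, mul_assoc, swst]
    have hDt' : ((↑t : A) * ((↑t : A) * W)) • δ (↑t⁻¹ : A) = -(W • δ (↑t : A)) :=
      neg_eq_iff_eq_neg.mp (lemD t).symm
    have hDs' : ((↑s : A) * ((↑s : A) * W)) • δ (↑s⁻¹ : A) = -(W • δ (↑s : A)) :=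
      neg_eq_iff_eq_neg.mp (lemD s).symm
    have hDp' : ((↑(t*s) : A) * ((↑(t*s) : A) * W)) • δ (↑(t*s)⁻¹ : A) =
        -(W • δ (↑(t*s) : A)) :=
      neg_eq_iff_eq_neg.mp (lemD (t*s)).symm
    have e1 : ((↑(t*s) : A) * ((↑(t*s) : A) * W)) • δ (↑t⁻¹ : A) =
        -((((↑s : A) * ↑s) * W) • δ (↑t : A)) := by
      rw [rp, mul_smul, hDt', smul_neg, smul_smul]
    have e2 : ((↑(t*s) : A) * ((↑(t*s) : A) * W)) • δ (↑s⁻¹ : A) =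
        (((↑t : A) * ↑t) * W) • δ (↑t : A) := by
      rw [rp2, mul_smul, hDs', hδs]
      simp only [smul_neg, neg_neg, smul_smul]
    rw [e1, e2, hDp'] at h2
    have hpδ : δ (↑(t*s) : A) = c • δ (↑t : A) - δ ((↑t : A) * ↑t) := by
      rw [Units.val_mul, hs, mul_sub, mul_smul_comm, mul_one, map_sub, map_smul]
    rw [hpδ] at h2
    have hRr : (c : ℂ) • (-(W • ((c : ℂ) • δ (↑t : A) - δ ((↑t : A) * ↑t)))) =
        c • (W • δ ((↑t : A) * ↑t)) - ((c*c) : ℂ) • (W • δ (↑t : A)) := by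
      rw [smul_sub, hsc, neg_sub, smul_sub, smul_smul]
    rw [hRr] at h2
    have hdiff : ((↑t : A) * ↑t) * W - ((↑s : A) * ↑s) * W =
        ((2*c : ℂ)) • ((↑t : A) * W) - ((c*c : ℂ)) • W := by
      rw [hs]
      simp only [sub_mul, mul_sub, smul_mul_assoc, mul_smul_comm, one_mul, mul_one, smul_smul]
      module
    rw [neg_add_eq_sub, ← sub_smul, hdiff, sub_smul, smul_assoc, smul_assoc] at h2
    have h3 : ((2*c : ℂ)) • (((↑t : A) * W) • δ (↑t : A)) = c • (W • δ ((↑t : A) * ↑t)) := by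
      have := h2
      rw [sub_left_inj] at this
      exact this
    have h4 := congrArg (fun m => (c⁻¹ : ℂ) • m) h3
    simp only [smul_smul] at h4
    have hc2 : (c⁻¹ * (2*c) : ℂ) = 2 := by field_simp
    have hc3 : (c⁻¹ * c : ℂ) = 1 := inv_mul_cancel₀ hc0
    rw [hc2, hc3, one_smul] at h4
    have h5 : W • (δ ((↑t : A) * ↑t) - (2:ℂ) • ((↑t : A) • δ (↑t : A))) = 0 := by
      rw [smul_sub, hsc, ← mul_smul, hcomm, ← h4, sub_self]
    have h6 := hW _ h5
    exact sub_eq_zero.mp h6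
  -- general case
  intro a
  obtain ⟨c, s, hc0, hs⟩ := shift (-a)
  have hs' : (↑s : A) = c • 1 + a := by rw [hs, sub_neg_eq_add]
  have hδs : δ (↑s : A) = δ a := by
    rw [hs', map_add, map_smul, hδ1, smul_zero, zero_add]
  have hss : (↑s : A) * ↑s = (((c*c : ℂ)) • (1:A) + c • a + c • a) + a * a := by
    rw [hs', add_mul, mul_add, mul_add, smul_mul_assoc, one_mul, smul_mul_assoc, one_mul,
      mul_smul_comm, mul_one, smul_smul]
    abel
  have h := mainU s
  rw [hss, hδs, hs'] at h
  simp only [map_add, map_smul, hδ1, smul_zero, zero_add] at h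
  rw [add_smul, smul_one_smul, smul_add, two_smul ℂ ((c : ℂ) • δ a)] at h
  calc δ (a*a) = ((c • δ a + c • δ a) + δ (a*a)) - (c • δ a + c • δ a) := by abel
  _ = ((c • δ a + c • δ a) + (2:ℂ) • (a • δ a)) - (c • δ a + c • δ a) := by rw [h]
  _ = (2:ℂ) • (a • δ a) := by abel
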